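/- Let G be a finite simple graph on n ≥ 2 vertices whose minimum degree δ satisfies δ ≥ 2·log₂(n). Then avd(G) ≤ (n+1)/2. -/

import Mathlib

open Finset

/-- `S` is a dominating set of `G`: every vertex is in `S` or adjacent to a vertex of `S`. -/
def SimpleGraph.IsDomSet {V : Type*} (G : SimpleGraph V) (S : Finset V) : Prop :=
  ∀ v : V, v ∈ S ∨ ∃ u ∈ S, G.Adj u v

/-- The family of all dominating sets of `G`. -/
noncomputable def SimpleGraph.domSets {V : Type*} [Fintype V] (G : SimpleGraph V) :
    Finset (Finset V) :=
  @Finset.filter _ (fun S => G.IsDomSet S) (Classical.decPred _) Finset.univ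

/-- The average order (cardinality) of a dominating set of `G`. -/
noncomputable def SimpleGraph.avd {V : Type*} [Fintype V] (G : SimpleGraph V) : ℝ :=
  (∑ S ∈ G.domSets, (S.card : ℝ)) / (G.domSets).card
/-- For a graph `G` on `n ≥ 2` vertices with minimum degree `δ ≥ 2·log₂(n)`,
`avd(G) ≤ (n+1)/2`. -/
theorem avd_le_of_minDegree_log {V : Type*} [Fintype V] (G : SimpleGraph V)
    [DecidableRel G.Adj] (n : ℕ) (hn : n = Fintype.card V) (h2 : 2 ≤ n)
    (hδ : 2 * Real.logb 2 (n : ℝ) ≤ (G.minDegree : ℝ)) :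
    G.avd ≤ ((n : ℝ) + 1) / 2 := by
  classical
  set δ := G.minDegree with hδdef
  have hV : Nonempty V := by
    rw [← Fintype.card_pos_iff]; omega
  obtain ⟨v0⟩ := hV
  have hδn : δ < n := by
    have h1 := G.minDegree_le_degree v0
    have h2 := G.degree_lt_card_verts v0
    omega
  -- n² ≤ 2^δ
  have hn2 : n ^ 2 ≤ 2 ^ δ := by
    have hb : (1:ℝ) < 2 := one_lt_two
    have hx : (0:ℝ) < (n:ℝ) ^ 2 := by positivity
    have hlog : Real.logb 2 ((n:ℝ) ^ 2) ≤ (δ : ℝ) := by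
      rw [Real.logb_pow]; push_cast; linarith
    have := (Real.logb_le_iff_le_rpow hb hx).1 hlog
    have h2' : ((n ^ 2 : ℕ) : ℝ) ≤ ((2 ^ δ : ℕ) : ℝ) := by
      push_cast
      rw [← Real.rpow_natCast 2 δ]
      exact this
    exact_mod_cast h2'
  have hmem : ∀ S : Finset V, S ∈ G.domSets ↔ G.IsDomSet S := by
    intro S
    unfold SimpleGraph.domSets
    rw [Finset.mem_filter]
    simp
  set D := G.domSets with hDdef
  set ND : Finset (Finset V) := univ.filter (fun S => ¬ G.IsDomSet S) with hNDdef
  have hcard : D.card + ND.card = 2 ^ n := by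
    have hD : D = univ.filter (fun S => G.IsDomSet S) := by
      ext S; simp [hmem S]
    rw [hD, hNDdef, Finset.card_filter_add_card_filter_not, card_univ, hn]
    exact Fintype.card_finset
  -- bound on number of non-dominating sets
  have hND : ND.card ≤ n * 2 ^ (n - δ - 1) := by
    have hsub : ND ⊆ univ.biUnion
        (fun v => ((insert v (G.neighborFinset v))ᶜ).powerset) := by
      intro S hS
      simp only [hNDdef, mem_filter, mem_univ, true_and] at hS
      unfold SimpleGraph.IsDomSet at hS
      push_neg at hS
      obtain ⟨v, hv, hadj⟩ := hS
      simp only [mem_biUnion, mem_univ, true_and, mem_powerset]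
      refine ⟨v, fun u hu => ?_⟩
      simp only [mem_compl, mem_insert, SimpleGraph.mem_neighborFinset]
      push_neg
      exact ⟨fun h => hv (h ▸ hu), fun h => hadj u hu h.symm⟩
    calc ND.card ≤ (univ.biUnion
          (fun v => ((insert v (G.neighborFinset v))ᶜ).powerset)).card :=
          card_le_card hsub
      _ ≤ ∑ v : V, ((insert v (G.neighborFinset v))ᶜ).powerset.card :=
          card_biUnion_le
      _ ≤ ∑ _v : V, 2 ^ (n - δ - 1) := by
          refine Finset.sum_le_sum fun v _ => ?_
          rw [card_powerset, card_compl,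
            card_insert_of_notMem (G.notMem_neighborFinset_self v),
            SimpleGraph.card_neighborFinset_eq_degree]
          apply Nat.pow_le_pow_right (by norm_num)
          have := G.minDegree_le_degree v
          omega
      _ = n * 2 ^ (n - δ - 1) := by
          rw [Finset.sum_const, card_univ, ← hn, smul_eq_mul]
  have hDpos : 0 < D.card := by
    have : (univ : Finset V) ∈ D := (hmem _).2 (fun v => Or.inl (mem_univ v))
    exact card_pos.2 ⟨_, this⟩
  have hkey : n * ND.card ≤ D.card := by
    have h1 : (n + 1) * ND.card ≤ 2 ^ n := by
      calc (n + 1) * ND.card ≤ (n + 1) * (n * 2 ^ (n - δ - 1)) :=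
            Nat.mul_le_mul_left _ hND
        _ ≤ (2 * n) * (n * 2 ^ (n - δ - 1)) := by
            apply Nat.mul_le_mul_right; omega
        _ = 2 * n ^ 2 * 2 ^ (n - δ - 1) := by ring
        _ ≤ 2 * 2 ^ δ * 2 ^ (n - δ - 1) := by
            apply Nat.mul_le_mul_right
            exact Nat.mul_le_mul_left 2 hn2
        _ = 2 ^ (1 + δ + (n - δ - 1)) := by rw [pow_add, pow_add]; ring
        _ = 2 ^ n := by congr 1; omega
    have h2' : n * ND.card + ND.card ≤ D.card + ND.card := by
      rw [hcard]
      calc n * ND.card + ND.card = (n + 1) * ND.card := by ring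
        _ ≤ 2 ^ n := h1
    exact Nat.le_of_add_le_add_right h2'
  -- split the sum
  set A := D.filter (fun S => Sᶜ ∈ D) with hAdef
  set B := D.filter (fun S => ¬ Sᶜ ∈ D) with hBdef
  have hsplit : ∑ S ∈ D, S.card = ∑ S ∈ A, S.card + ∑ S ∈ B, S.card :=
    (Finset.sum_filter_add_sum_filter_not D _ _).symm
  have hA2 : 2 * ∑ S ∈ A, S.card = A.card * n := by
    have hinv : ∑ S ∈ A, S.card = ∑ S ∈ A, Sᶜ.card := by
      refine Finset.sum_nbij' (i := fun S => Sᶜ) (j := fun S => Sᶜ) ?_ ?_ ?_ ?_ ?_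
      · intro S hS
        simp only [hAdef, mem_filter] at hS ⊢
        exact ⟨hS.2, by rw [compl_compl]; exact hS.1⟩
      · intro S hS
        simp only [hAdef, mem_filter] at hS ⊢
        exact ⟨hS.2, by rw [compl_compl]; exact hS.1⟩
      · intro S _; exact compl_compl S
      · intro S _; exact compl_compl S
      · intro S _; rw [compl_compl]
    calc 2 * ∑ S ∈ A, S.card = ∑ S ∈ A, S.card + ∑ S ∈ A, Sᶜ.card := by
          rw [← hinv]; ring
      _ = ∑ S ∈ A, (S.card + Sᶜ.card) := Finset.sum_add_distrib.symm
      _ = ∑ _S ∈ A, n := by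
          refine Finset.sum_congr rfl fun S _ => ?_
          rw [Finset.card_add_card_compl, hn]
      _ = A.card * n := by rw [Finset.sum_const, smul_eq_mul]
  have hB : B.card ≤ ND.card := by
    apply Finset.card_le_card_of_injOn (fun S => Sᶜ)
    · intro S hS
      simp only [hBdef, mem_filter, Finset.mem_coe] at hS
      simp only [hNDdef, mem_filter, mem_univ, true_and, Finset.mem_coe]
      intro hdom
      exact hS.2 ((hmem _).2 hdom)
    · intro a _ b _ h
      exact compl_injective h
  have hfinal : 2 * ∑ S ∈ D, S.card ≤ (n + 1) * D.card := by
    have hBsum : ∑ S ∈ B, S.card ≤ B.card * n := by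
      calc ∑ S ∈ B, S.card ≤ ∑ _S ∈ B, n :=
            Finset.sum_le_sum fun S _ => by rw [hn]; exact card_le_univ S
        _ = B.card * n := by rw [Finset.sum_const, smul_eq_mul]
    have hAB : A.card + B.card = D.card :=
      Finset.card_filter_add_card_filter_not _
    calc 2 * ∑ S ∈ D, S.card
        = 2 * ∑ S ∈ A, S.card + 2 * ∑ S ∈ B, S.card := by rw [hsplit]; ring
      _ ≤ A.card * n + 2 * (B.card * n) := by
          rw [hA2]; exact Nat.add_le_add_left (Nat.mul_le_mul_left 2 hBsum) _
      _ = (A.card + B.card) * n + B.card * n := by ring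
      _ = D.card * n + B.card * n := by rw [hAB]
      _ ≤ D.card * n + ND.card * n := by
          exact Nat.add_le_add_left (Nat.mul_le_mul_right n hB) _
      _ ≤ D.card * n + D.card := by
          refine Nat.add_le_add_left ?_ _
          rw [mul_comm]; exact hkey
      _ = (n + 1) * D.card := by ring
  -- conclude in ℝ
  have hdR : (0:ℝ) < (D.card : ℝ) := by exact_mod_cast hDpos
  unfold SimpleGraph.avd
  rw [div_le_div_iff₀ hdR two_pos]
  have hcast : (2:ℝ) * (∑ S ∈ D, (S.card : ℝ)) ≤ ((n:ℝ) + 1) * D.card := by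
    exact_mod_cast hfinal
  rw [← hDdef]
  linarith
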